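/- Let w, v, u ∈ Q and let 1 ≤ i, k, p ≤ m with i ≠ k and k ≠ p. For all scalars a, b, c, a', b', c' ∈ A satisfying abc = a'b'c' and a²bc = a'²b'c', the triple commutators [E_{i,a·w}, [E*_{k,b·v}, E*_{p,c·u}]] and [E_{i,a'·w}, [E*_{k,b'·v}, E*_{p,c'·u}]] are equal as automorphisms of M. -/

import Mathlib

open QuadraticMap
open scoped commutatorElement

/-- The DSER elementary orthogonal transformation `E_{i,w}` on `M = Q ⊕ P ⊕ P*`,
`P = A^m`:  `E_{i,w}(z,x,f) = (z − f(xᵢ)•w, x + ⟨w,z⟩•xᵢ − f(xᵢ)·q(w)•xᵢ, f)`. -/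
noncomputable def Eplus {A Q : Type*} [CommRing A] [AddCommGroup Q] [Module A Q]
    {m : ℕ} (q : QuadraticForm A Q) (i : Fin m) (w : Q) :
    (Q × (Fin m → A) × (Fin m → A)) ≃ₗ[A] (Q × (Fin m → A) × (Fin m → A)) where
  toFun p := (p.1 - p.2.2 i • w,
    p.2.1 + polar ⇑q w p.1 • (Pi.single i 1 : Fin m → A)
      - (p.2.2 i * q w) • (Pi.single i 1 : Fin m → A),
    p.2.2)
  invFun p := (p.1 + p.2.2 i • w,
    p.2.1 - polar ⇑q w p.1 • (Pi.single i 1 : Fin m → A)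
      - (p.2.2 i * q w) • (Pi.single i 1 : Fin m → A),
    p.2.2)
  map_add' p p' := by
    obtain ⟨z, x, f⟩ := p
    obtain ⟨z', x', f'⟩ := p'
    refine Prod.ext ?_ (Prod.ext ?_ rfl)
    · show z + z' - (f i + f' i) • w = (z - f i • w) + (z' - f' i • w)
      module
    · show x + x' + polar ⇑q w (z + z') • (Pi.single i 1 : Fin m → A)
        - ((f i + f' i) * q w) • (Pi.single i 1 : Fin m → A) = _
      rw [polar_add_right]
      show _ = (x + polar ⇑q w z • (Pi.single i 1 : Fin m → A) - (f i * q w) • (Pi.single i 1 : Fin m → A))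
        + (x' + polar ⇑q w z' • (Pi.single i 1 : Fin m → A) - (f' i * q w) • (Pi.single i 1 : Fin m → A))
      module
  map_smul' a p := by
    obtain ⟨z, x, f⟩ := p
    refine Prod.ext ?_ (Prod.ext ?_ rfl)
    · show a • z - (a • f) i • w = a • (z - f i • w)
      simp only [Pi.smul_apply, smul_eq_mul]
      module
    · show a • x + polar ⇑q w (a • z) • (Pi.single i 1 : Fin m → A)
        - ((a • f) i * q w) • (Pi.single i 1 : Fin m → A)
        = a • (x + polar ⇑q w z • (Pi.single i 1 : Fin m → A) - (f i * q w) • (Pi.single i 1 : Fin m → A))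
      rw [polar_smul_right]
      simp only [Pi.smul_apply, smul_eq_mul]
      module
  left_inv p := by
    obtain ⟨z, x, f⟩ := p
    refine Prod.ext ?_ (Prod.ext ?_ rfl)
    · show z - f i • w + f i • w = z
      module
    · show x + polar ⇑q w z • (Pi.single i 1 : Fin m → A) - (f i * q w) • (Pi.single i 1 : Fin m → A)
        - polar ⇑q w (z - f i • w) • (Pi.single i 1 : Fin m → A)
        - (f i * q w) • (Pi.single i 1 : Fin m → A) = x
      rw [polar_sub_right, polar_smul_right, polar_self]
      simp only [smul_eq_mul]
      module
  right_inv p := by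
    obtain ⟨z, x, f⟩ := p
    refine Prod.ext ?_ (Prod.ext ?_ rfl)
    · show z + f i • w - f i • w = z
      module
    · show x - polar ⇑q w z • (Pi.single i 1 : Fin m → A) - (f i * q w) • (Pi.single i 1 : Fin m → A)
        + polar ⇑q w (z + f i • w) • (Pi.single i 1 : Fin m → A)
        - (f i * q w) • (Pi.single i 1 : Fin m → A) = x
      rw [polar_add_right, polar_smul_right, polar_self]
      simp only [smul_eq_mul]
      module

/-- The DSER elementary orthogonal transformation `E*_{i,w}` on `M = Q ⊕ P ⊕ P*`:
`E*_{i,w}(z,x,f) = (z − fᵢ(x)•w, x, f + ⟨w,z⟩•fᵢ − fᵢ(x)·q(w)•fᵢ)`. -/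
noncomputable def Estar {A Q : Type*} [CommRing A] [AddCommGroup Q] [Module A Q]
    {m : ℕ} (q : QuadraticForm A Q) (i : Fin m) (w : Q) :
    (Q × (Fin m → A) × (Fin m → A)) ≃ₗ[A] (Q × (Fin m → A) × (Fin m → A)) where
  toFun p := (p.1 - p.2.1 i • w,
    p.2.1,
    p.2.2 + polar ⇑q w p.1 • (Pi.single i 1 : Fin m → A)
      - (p.2.1 i * q w) • (Pi.single i 1 : Fin m → A))
  invFun p := (p.1 + p.2.1 i • w,
    p.2.1,
    p.2.2 - polar ⇑q w p.1 • (Pi.single i 1 : Fin m → A)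
      - (p.2.1 i * q w) • (Pi.single i 1 : Fin m → A))
  map_add' p p' := by
    obtain ⟨z, x, f⟩ := p
    obtain ⟨z', x', f'⟩ := p'
    refine Prod.ext ?_ (Prod.ext rfl ?_)
    · show z + z' - (x i + x' i) • w = (z - x i • w) + (z' - x' i • w)
      module
    · show f + f' + polar ⇑q w (z + z') • (Pi.single i 1 : Fin m → A)
        - ((x i + x' i) * q w) • (Pi.single i 1 : Fin m → A) = _
      rw [polar_add_right]
      show _ = (f + polar ⇑q w z • (Pi.single i 1 : Fin m → A)
          - (x i * q w) • (Pi.single i 1 : Fin m → A))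
        + (f' + polar ⇑q w z' • (Pi.single i 1 : Fin m → A)
          - (x' i * q w) • (Pi.single i 1 : Fin m → A))
      module
  map_smul' a p := by
    obtain ⟨z, x, f⟩ := p
    refine Prod.ext ?_ (Prod.ext rfl ?_)
    · show a • z - (a • x) i • w = a • (z - x i • w)
      simp only [Pi.smul_apply, smul_eq_mul]
      module
    · show a • f + polar ⇑q w (a • z) • (Pi.single i 1 : Fin m → A)
        - ((a • x) i * q w) • (Pi.single i 1 : Fin m → A)
        = a • (f + polar ⇑q w z • (Pi.single i 1 : Fin m → A)
          - (x i * q w) • (Pi.single i 1 : Fin m → A))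
      rw [polar_smul_right]
      simp only [Pi.smul_apply, smul_eq_mul]
      module
  left_inv p := by
    obtain ⟨z, x, f⟩ := p
    refine Prod.ext ?_ (Prod.ext rfl ?_)
    · show z - x i • w + x i • w = z
      module
    · show f + polar ⇑q w z • (Pi.single i 1 : Fin m → A)
        - (x i * q w) • (Pi.single i 1 : Fin m → A)
        - polar ⇑q w (z - x i • w) • (Pi.single i 1 : Fin m → A)
        - (x i * q w) • (Pi.single i 1 : Fin m → A) = f
      rw [polar_sub_right, polar_smul_right, polar_self]
      simp only [smul_eq_mul]
      module
  right_inv p := by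
    obtain ⟨z, x, f⟩ := p
    refine Prod.ext ?_ (Prod.ext rfl ?_)
    · show z + x i • w - x i • w = z
      module
    · show f - polar ⇑q w z • (Pi.single i 1 : Fin m → A)
        - (x i * q w) • (Pi.single i 1 : Fin m → A)
        + polar ⇑q w (z + x i • w) • (Pi.single i 1 : Fin m → A)
        - (x i * q w) • (Pi.single i 1 : Fin m → A) = f
      rw [polar_add_right, polar_smul_right, polar_self]
      simp only [smul_eq_mul]
      module


section Aux

variable {A Q : Type*} [CommRing A] [AddCommGroup Q] [Module A Q] {m : ℕ}

lemma mul_apply' (e₁ e₂ : (Q × (Fin m → A) × (Fin m → A)) ≃ₗ[A] (Q × (Fin m → A) × (Fin m → A)))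
    (x : Q × (Fin m → A) × (Fin m → A)) : (e₁ * e₂) x = e₁ (e₂ x) := rfl

lemma Eplus_apply (q : QuadraticForm A Q) (i : Fin m) (w : Q) (z : Q) (x f : Fin m → A) :
    Eplus q i w (z, x, f) = (z - f i • w,
      x + polar ⇑q w z • (Pi.single i 1 : Fin m → A)
        - (f i * q w) • (Pi.single i 1 : Fin m → A), f) := rfl

lemma Estar_apply (q : QuadraticForm A Q) (i : Fin m) (w : Q) (z : Q) (x f : Fin m → A) :
    Estar q i w (z, x, f) = (z - x i • w, x,
      f + polar ⇑q w z • (Pi.single i 1 : Fin m → A)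
        - (x i * q w) • (Pi.single i 1 : Fin m → A)) := rfl

lemma Eplus_inv (q : QuadraticForm A Q) (i : Fin m) (w : Q) :
    (Eplus q i w)⁻¹ = Eplus q i (-w) := by
  refine LinearEquiv.ext fun p => ?_
  obtain ⟨z, x, f⟩ := p
  show (z + f i • w, x - polar ⇑q w z • (Pi.single i 1 : Fin m → A)
      - (f i * q w) • (Pi.single i 1 : Fin m → A), f) = _
  rw [Eplus_apply]
  refine Prod.ext ?_ (Prod.ext ?_ rfl)
  · show _ = z - f i • (-w); module
  · show _ = x + polar ⇑q (-w) z • (Pi.single i 1 : Fin m → A)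
      - (f i * q (-w)) • (Pi.single i 1 : Fin m → A)
    rw [polar_neg_left, QuadraticMap.map_neg]
    module

lemma Estar_inv (q : QuadraticForm A Q) (i : Fin m) (w : Q) :
    (Estar q i w)⁻¹ = Estar q i (-w) := by
  refine LinearEquiv.ext fun p => ?_
  obtain ⟨z, x, f⟩ := p
  show (z + x i • w, x, f - polar ⇑q w z • (Pi.single i 1 : Fin m → A)
      - (x i * q w) • (Pi.single i 1 : Fin m → A)) = _
  rw [Estar_apply]
  refine Prod.ext ?_ (Prod.ext rfl ?_)
  · show _ = z - x i • (-w); module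
  · show _ = f + polar ⇑q (-w) z • (Pi.single i 1 : Fin m → A)
      - (x i * q (-w)) • (Pi.single i 1 : Fin m → A)
    rw [polar_neg_left, QuadraticMap.map_neg]
    module

lemma inner_apply (q : QuadraticForm A Q) (k p : Fin m) (hkp : k ≠ p) (v u : Q)
    (z : Q) (x f : Fin m → A) :
    ⁅Estar q k v, Estar q p u⁆ (z, x, f)
      = (z, x, f + (polar ⇑q v u * x k) • (Pi.single p 1 : Fin m → A)
          - (polar ⇑q v u * x p) • (Pi.single k 1 : Fin m → A)) := by
  have hpk : (Pi.single p 1 : Fin m → A) k = 0 := by simp [Pi.single_apply, hkp]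
  have hkp' : (Pi.single k 1 : Fin m → A) p = 0 := by simp [Pi.single_apply, hkp.symm]
  simp only [commutatorElement_def, Estar_inv, mul_apply', Estar_apply]
  simp only [Pi.add_apply, Pi.sub_apply, Pi.smul_apply, smul_eq_mul, hpk, hkp',
    Pi.single_eq_same, polar_add_right, polar_sub_right, polar_smul_right, polar_neg_right,
    polar_smul_left, polar_neg_left, polar_self, QuadraticMap.map_neg, mul_zero, zero_mul,
    add_zero, zero_add, mul_one, sub_zero, neg_zero, neg_neg]
  rw [polar_comm (⇑q) u v]
  refine Prod.ext ?_ (Prod.ext ?_ ?_)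
  · show _ = _
    match_scalars <;> ring
  · show _ = _
    match_scalars <;> ring
  · show _ = _
    match_scalars <;> ring

set_option maxHeartbeats 1000000 in
lemma triple_apply (q : QuadraticForm A Q) (i k p : Fin m) (hik : i ≠ k) (hkp : k ≠ p)
    (w v u : Q) (z : Q) (x f : Fin m → A) :
    ⁅Eplus q i w, ⁅Estar q k v, Estar q p u⁆⁆ (z, x, f)
      = (z - (polar ⇑q v u * (Pi.single p 1 : Fin m → A) i * x k) • w,
         x - (polar ⇑q v u * (Pi.single p 1 : Fin m → A) i * x k * q w)
            • (Pi.single i 1 : Fin m → A),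
         f + (polar ⇑q v u * (Pi.single p 1 : Fin m → A) i * polar ⇑q w z
              + polar ⇑q v u * (Pi.single p 1 : Fin m → A) i * (f i * q w)
              - polar ⇑q v u ^ 2 * ((Pi.single p 1 : Fin m → A) i) ^ 2 * (x k * q w))
            • (Pi.single k 1 : Fin m → A)) := by
  have hki : (Pi.single k 1 : Fin m → A) i = 0 := by simp [Pi.single_apply, hik]
  have hik2 : (Pi.single i 1 : Fin m → A) k = 0 := by simp [Pi.single_apply, hik.symm]
  have hsymm : (Pi.single i 1 : Fin m → A) p = (Pi.single p 1 : Fin m → A) i := by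
    rcases eq_or_ne p i with rfl | h
    · rfl
    · rw [Pi.single_eq_of_ne h, Pi.single_eq_of_ne h.symm]
  rw [commutatorElement_def, commutatorElement_inv]
  simp only [mul_apply', inner_apply q k p hkp v u, inner_apply q p k hkp.symm u v,
    Eplus_inv, Eplus_apply]
  simp only [Pi.add_apply, Pi.sub_apply, Pi.smul_apply, smul_eq_mul, hki, hik2,
    Pi.single_eq_same, polar_add_right, polar_sub_right, polar_smul_right, polar_neg_right,
    polar_smul_left, polar_neg_left, polar_self, QuadraticMap.map_neg, mul_zero, zero_mul,
    add_zero, zero_add, mul_one, sub_zero, neg_zero, neg_neg, hsymm]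
  rw [polar_comm (⇑q) u v]
  refine Prod.ext ?_ (Prod.ext ?_ ?_)
  · show _ = _
    match_scalars <;> ring
  · show _ = _
    match_scalars <;> ring
  · show _ = _
    match_scalars <;> ring

end Aux

theorem triple_commutator_Eplus_EstarEstar_scaling
    {A Q : Type*} [CommRing A] [Invertible (2 : A)] [AddCommGroup Q] [Module A Q]
    {m : ℕ} (q : QuadraticForm A Q) (i k p : Fin m)
    (hik : i ≠ k) (hkp : k ≠ p) (w v u : Q)
    (a b c a' b' c' : A) (h1 : a * b * c = a' * b' * c')
    (h2 : a ^ 2 * b * c = a' ^ 2 * b' * c') :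
    ⁅Eplus q i (a • w), ⁅Estar q k (b • v), Estar q p (c • u)⁆⁆
      = ⁅Eplus q i (a' • w), ⁅Estar q k (b' • v), Estar q p (c' • u)⁆⁆ := by
  have h3 : (a * b * c) ^ 2 = (a' * b' * c') ^ 2 := by rw [h1]
  refine LinearEquiv.ext fun pt => ?_
  obtain ⟨z, x, f⟩ := pt
  rw [triple_apply q i k p hik hkp (a • w) (b • v) (c • u) z x f,
    triple_apply q i k p hik hkp (a' • w) (b' • v) (c' • u) z x f]
  simp only [polar_smul_left, polar_smul_right, QuadraticMap.map_smul, smul_eq_mul]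
  refine Prod.ext ?_ (Prod.ext ?_ ?_)
  · match_scalars
    · ring1
    · linear_combination (-(polar ⇑q v u * (Pi.single p 1 : Fin m → A) i * x k)) * h1
  · match_scalars
    · ring1
    · linear_combination (-(polar ⇑q v u * (Pi.single p 1 : Fin m → A) i * x k * q w)) * h2
  · match_scalars
    · ring1
    · linear_combination (polar ⇑q v u * (Pi.single p 1 : Fin m → A) i * polar ⇑q w z) * h1
        + (polar ⇑q v u * (Pi.single p 1 : Fin m → A) i * (f i * q w)) * h2
        - (polar ⇑q v u ^ 2 * ((Pi.single p 1 : Fin m → A) i) ^ 2 * (x k * q w)) * h3
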